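/- Generalized convergence lemma for varying measures and varying integrands (Lemma 4.8). Let (X, B) be a measurable space, let μ, μ₁, μ₂, … be probability measures on (X, B) such that μ_n(A) → μ(A) for every A ∈ B, and let f, f₁, f₂, … be measurable real-valued functions on X such that f_n(x) → f(x) for every x ∈ X. Let V : X → (0, ∞) be measurable with sup_n sup_x |f_n(x)|/V(x) < ∞, μ(V) < ∞, and sup_n μ_n(V^α) < ∞ for some α > 1. Then lim_{n→∞} ∫ f_n dμ_n = ∫ f dμ. -/

import Mathlib

open MeasureTheory Filter
open scoped ENNReal

lemma aux_lintegral_le_liminf {X : Type*} [MeasurableSpace X]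
    (μ : Measure X) (μs : ℕ → Measure X)
    (hsetwise : ∀ A : Set X, MeasurableSet A → Tendsto (fun n => μs n A) atTop (nhds (μ A)))
    {g : X → ℝ≥0∞} (hg : Measurable g) :
    ∫⁻ x, g x ∂μ ≤ liminf (fun n => ∫⁻ x, g x ∂(μs n)) atTop := by
  rw [lintegral_eq_iSup_eapprox_lintegral hg]
  refine iSup_le fun m => ?_
  have htend : Tendsto (fun k => (SimpleFunc.eapprox g m).lintegral (μs k)) atTop
      (nhds ((SimpleFunc.eapprox g m).lintegral μ)) := by
    simp only [SimpleFunc.lintegral]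
    refine tendsto_finset_sum _ fun y _ => ?_
    refine ENNReal.Tendsto.const_mul (hsetwise _ (SimpleFunc.measurableSet_fiber _ _)) ?_
    right
    rcases SimpleFunc.mem_range.mp ‹y ∈ _› with ⟨x, rfl⟩
    exact (SimpleFunc.eapprox_lt_top g m x).ne
  have hle : ∀ k, (SimpleFunc.eapprox g m).lintegral (μs k) ≤ ∫⁻ x, g x ∂(μs k) := fun k => by
    rw [← SimpleFunc.lintegral_eq_lintegral]
    refine lintegral_mono fun x => ?_
    rw [← SimpleFunc.iSup_eapprox_apply hg]
    exact le_iSup (fun n => SimpleFunc.eapprox g n x) m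
  calc (SimpleFunc.eapprox g m).lintegral μ
      = liminf (fun k => (SimpleFunc.eapprox g m).lintegral (μs k)) atTop := htend.liminf_eq.symm
    _ ≤ liminf (fun n => ∫⁻ x, g x ∂(μs n)) atTop := liminf_le_liminf (Eventually.of_forall hle)

lemma aux_fatou_setwise {X : Type*} [MeasurableSpace X]
    (μ : Measure X) (μs : ℕ → Measure X)
    (hsetwise : ∀ A : Set X, MeasurableSet A → Tendsto (fun n => μs n A) atTop (nhds (μ A)))
    {h : ℕ → X → ℝ≥0∞} (hmeas : ∀ n, Measurable (h n)) {H : X → ℝ≥0∞}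
    (hlim : ∀ x, Tendsto (fun n => h n x) atTop (nhds (H x))) :
    ∫⁻ x, H x ∂μ ≤ liminf (fun n => ∫⁻ x, h n x ∂(μs n)) atTop := by
  set G : ℕ → X → ℝ≥0∞ := fun n x => ⨅ i, h (i + n) x with hG
  have hGmeas : ∀ n, Measurable (G n) := fun n => Measurable.iInf fun i => hmeas (i + n)
  have hGmono : Monotone G := by
    intro a b hab x
    exact le_iInf fun i => iInf_le_of_le (i + (b - a)) (by rw [add_assoc, Nat.sub_add_cancel hab])
  have hGle : ∀ n k, n ≤ k → G n ≤ h k := by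
    intro n k hnk x
    exact iInf_le_of_le (k - n) (by rw [Nat.sub_add_cancel hnk])
  have hH : ∀ x, H x = ⨆ n, G n x := by
    intro x
    rw [← (hlim x).liminf_eq, liminf_eq_iSup_iInf_of_nat']
  calc ∫⁻ x, H x ∂μ = ∫⁻ x, ⨆ n, G n x ∂μ := by simp_rw [hH]
    _ = ⨆ n, ∫⁻ x, G n x ∂μ :=
        lintegral_iSup hGmeas (fun a b hab x => hGmono hab x)
    _ ≤ liminf (fun n => ∫⁻ x, h n x ∂(μs n)) atTop := by
        refine iSup_le fun n => ?_
        refine (aux_lintegral_le_liminf μ μs hsetwise (hGmeas n)).trans ?_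
        refine liminf_le_liminf ?_
        filter_upwards [eventually_ge_atTop n] with k hk
        exact lintegral_mono (hGle n k hk)

lemma aux_bdd_setwise {X : Type*} [MeasurableSpace X]
    (μ : Measure X) (μs : ℕ → Measure X)
    [IsProbabilityMeasure μ] (hμs : ∀ n, IsProbabilityMeasure (μs n))
    (hsetwise : ∀ A : Set X, MeasurableSet A → Tendsto (fun n => μs n A) atTop (nhds (μ A)))
    {h : ℕ → X → ℝ} (hmeas : ∀ n, Measurable (h n)) {H : X → ℝ} (hHmeas : Measurable H)
    (hlim : ∀ x, Tendsto (fun n => h n x) atTop (nhds (H x)))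
    {C : ℝ} (hC : 0 ≤ C) (hbdd : ∀ n x, |h n x| ≤ C) :
    Tendsto (fun n => ∫ x, h n x ∂(μs n)) atTop (nhds (∫ x, H x ∂μ)) := by
  have hHbdd : ∀ x, |H x| ≤ C := fun x =>
    le_of_tendsto ((hlim x).abs) (Eventually.of_forall fun n => hbdd n x)
  set a : ℕ → ℝ≥0∞ := fun n => ∫⁻ x, ENNReal.ofReal (C + h n x) ∂(μs n) with ha
  set b : ℕ → ℝ≥0∞ := fun n => ∫⁻ x, ENNReal.ofReal (C - h n x) ∂(μs n) with hb
  set A : ℝ≥0∞ := ∫⁻ x, ENNReal.ofReal (C + H x) ∂μ with hA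
  set B : ℝ≥0∞ := ∫⁻ x, ENNReal.ofReal (C - H x) ∂μ with hB
  set S : ℝ≥0∞ := ENNReal.ofReal (2 * C) with hS
  have hSne : S ≠ ⊤ := ENNReal.ofReal_ne_top
  have key : ∀ (ν : Measure X), IsProbabilityMeasure ν → ∀ (g : X → ℝ), Measurable g →
      (∀ x, |g x| ≤ C) →
      (∫⁻ x, ENNReal.ofReal (C + g x) ∂ν) + (∫⁻ x, ENNReal.ofReal (C - g x) ∂ν) = S := by
    intro ν hν g hg hgb
    rw [← lintegral_add_left (f := fun x => ENNReal.ofReal (C + g x))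
      (measurable_const.add hg).ennreal_ofReal]
    have : ∀ x, ENNReal.ofReal (C + g x) + ENNReal.ofReal (C - g x) = S := by
      intro x
      rw [← ENNReal.ofReal_add (by linarith [abs_le.mp (hgb x)]) (by linarith [abs_le.mp (hgb x)])]
      rw [hS]; ring_nf
    simp_rw [this]
    simp [lintegral_const]
  have hab : ∀ n, a n + b n = S := fun n => key (μs n) (hμs n) (h n) (hmeas n) (hbdd n)
  have hAB : A + B = S := key μ ‹_› H hHmeas hHbdd
  have hbne : ∀ n, b n ≠ ⊤ := fun n =>
    (lt_of_le_of_lt (le_trans le_add_self (le_of_eq (hab n))) (lt_top_iff_ne_top.mpr hSne)).ne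
  have hBne : B ≠ ⊤ :=
    (lt_of_le_of_lt (le_trans le_add_self (le_of_eq hAB)) (lt_top_iff_ne_top.mpr hSne)).ne
  have hfatA : A ≤ liminf a atTop := by
    refine aux_fatou_setwise μ μs hsetwise
      (fun n => ENNReal.measurable_ofReal.comp (measurable_const.add (hmeas n))) (fun x => ?_)
    exact (ENNReal.continuous_ofReal.tendsto _).comp (tendsto_const_nhds.add (hlim x))
  have hfatB : B ≤ liminf b atTop := by
    refine aux_fatou_setwise μ μs hsetwise
      (fun n => ENNReal.measurable_ofReal.comp (measurable_const.sub (hmeas n))) (fun x => ?_)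
    exact (ENNReal.continuous_ofReal.tendsto _).comp (tendsto_const_nhds.sub (hlim x))
  have haSb : ∀ n, a n = S - b n := fun n => ENNReal.eq_sub_of_add_eq (hbne n) (hab n)
  have hlimsup : limsup a atTop ≤ A := by
    have : limsup a atTop = S - liminf b atTop := by
      rw [limsup_eq_iInf_iSup_of_nat', liminf_eq_iSup_iInf_of_nat']
      simp_rw [haSb]
      rw [ENNReal.sub_iSup hSne]
      exact iInf_congr fun n => ENNReal.sub_iInf.symm
    rw [this, ENNReal.eq_sub_of_add_eq hBne hAB]
    exact tsub_le_tsub_left hfatB S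
  have htendA : Tendsto a atTop (nhds A) :=
    tendsto_of_le_liminf_of_limsup_le hfatA hlimsup
  -- convert to real integrals
  have hint : ∀ (ν : Measure X), IsProbabilityMeasure ν → ∀ (g : X → ℝ), Measurable g →
      (∀ x, |g x| ≤ C) → Integrable g ν := by
    intro ν hν g hg hgb
    exact ⟨hg.aestronglyMeasurable,
      HasFiniteIntegral.of_bounded (C := C) (Eventually.of_forall fun x => by
        simpa [Real.norm_eq_abs] using hgb x)⟩
  have hrepr : ∀ (ν : Measure X), IsProbabilityMeasure ν → ∀ (g : X → ℝ), Measurable g →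
      (hgb : ∀ x, |g x| ≤ C) →
      (∫⁻ x, ENNReal.ofReal (C + g x) ∂ν) = ENNReal.ofReal (C + ∫ x, g x ∂ν) := by
    intro ν hν g hg hgb
    rw [← ofReal_integral_eq_lintegral_ofReal (f := fun x => C + g x)
      ((integrable_const C).add (hint ν hν g hg hgb))
      (Eventually.of_forall fun x => by have := abs_le.mp (hgb x); dsimp; linarith)]
    rw [integral_add (integrable_const C) (hint ν hν g hg hgb)]
    simp
  have haeq : ∀ n, a n = ENNReal.ofReal (C + ∫ x, h n x ∂(μs n)) := fun n =>
    hrepr (μs n) (hμs n) (h n) (hmeas n) (hbdd n)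
  have hAeq : A = ENNReal.ofReal (C + ∫ x, H x ∂μ) := hrepr μ ‹_› H hHmeas hHbdd
  have hAne : A ≠ ⊤ := by rw [hAeq]; exact ENNReal.ofReal_ne_top
  have htoReal := (ENNReal.tendsto_toReal hAne).comp htendA
  have hInorm : ∀ (ν : Measure X), IsProbabilityMeasure ν → ∀ (g : X → ℝ), Measurable g →
      (∀ x, |g x| ≤ C) → |∫ x, g x ∂ν| ≤ C := by
    intro ν hν g hg hgb
    rw [← Real.norm_eq_abs]
    calc ‖∫ x, g x ∂ν‖ ≤ C * (ν Set.univ).toReal :=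
          norm_integral_le_of_norm_le_const (Eventually.of_forall fun x => by
            rw [Real.norm_eq_abs]; exact hgb x)
      _ = C := by simp
  have h1 : ∀ n, (a n).toReal = C + ∫ x, h n x ∂(μs n) := fun n => by
    rw [haeq n, ENNReal.toReal_ofReal
      (by linarith [abs_le.mp (hInorm (μs n) (hμs n) (h n) (hmeas n) (hbdd n))])]
  have h2 : A.toReal = C + ∫ x, H x ∂μ := by
    rw [hAeq, ENNReal.toReal_ofReal (by linarith [abs_le.mp (hInorm μ ‹_› H hHmeas hHbdd)])]
  have htoReal' : Tendsto (fun n => (a n).toReal) atTop (nhds A.toReal) := htoReal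
  simp_rw [h1, h2] at htoReal'
  have : Tendsto (fun n => C + ∫ x, h n x ∂(μs n)) atTop (nhds (C + ∫ x, H x ∂μ)) := htoReal'
  have := this.sub (tendsto_const_nhds (x := C) (f := atTop (α := ℕ)))
  simpa using this

/-- **Generalized convergence lemma for varying measures and varying integrands** (Lemma 4.8):
if probability measures `μ_n` converge setwise to `μ`, measurable functions `f_n` converge
pointwise to `f`, `V : X → (0, ∞)` is measurable with `sup_n |f_n|_V < ∞`, `μ(V) < ∞` and
`sup_n μ_n(V^α) < ∞` for some `α > 1`, then `∫ f_n dμ_n → ∫ f dμ`. -/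
theorem integral_tendsto_of_setwise_convergence
    {X : Type*} [MeasurableSpace X]
    (μ : Measure X) (μs : ℕ → Measure X)
    [IsProbabilityMeasure μ] (hμs : ∀ n, IsProbabilityMeasure (μs n))
    (hsetwise : ∀ A : Set X, MeasurableSet A → Tendsto (fun n => μs n A) atTop (nhds (μ A)))
    (f : X → ℝ) (fs : ℕ → X → ℝ) (hfmeas : Measurable f) (hfsmeas : ∀ n, Measurable (fs n))
    (hfs : ∀ x, Tendsto (fun n => fs n x) atTop (nhds (f x)))
    (V : X → ℝ) (hVmeas : Measurable V) (hVpos : ∀ x, 0 < V x)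
    (hbound : ∃ M : ℝ, ∀ n x, |fs n x| ≤ M * V x)
    (hVμ : ∫⁻ x, ENNReal.ofReal (V x) ∂μ ≠ ⊤)
    (α : ℝ) (hα : 1 < α)
    (hVα : ∃ M : ℝ≥0∞, M ≠ ⊤ ∧ ∀ n, ∫⁻ x, ENNReal.ofReal (V x ^ α) ∂(μs n) ≤ M) :
    Tendsto (fun n => ∫ x, fs n x ∂(μs n)) atTop (nhds (∫ x, f x ∂μ)) := by
  obtain ⟨M₀, hM₀⟩ := hbound
  obtain ⟨Mα, hMαtop, hMα⟩ := hVα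
  set M' : ℝ := max M₀ 1 with hM'def
  have hM'1 : (1:ℝ) ≤ M' := le_max_right _ _
  have hM'0 : (0:ℝ) < M' := lt_of_lt_of_le one_pos hM'1
  have hfsb : ∀ n x, |fs n x| ≤ M' * V x := fun n x =>
    (hM₀ n x).trans (mul_le_mul_of_nonneg_right (le_max_left _ _) (hVpos x).le)
  have hfb : ∀ x, |f x| ≤ M' * V x := fun x =>
    le_of_tendsto (hfs x).abs (Eventually.of_forall fun n => hfsb n x)
  have hα0 : (0:ℝ) < α - 1 := by linarith
  -- measurability of V ^ α
  have hVαmeas : Measurable fun x => V x ^ α :=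
    ((continuous_id.rpow_const fun y => Or.inr (by linarith)).measurable).comp hVmeas
  -- V is integrable w.r.t. each μs n
  have hVlint : ∀ n, ∫⁻ x, ENNReal.ofReal (V x) ∂(μs n) ≤ Mα + 1 := by
    intro n
    have hpt : ∀ x, ENNReal.ofReal (V x) ≤ ENNReal.ofReal (V x ^ α) + 1 := by
      intro x
      rcases le_or_gt (V x) 1 with hx | hx
      · calc ENNReal.ofReal (V x) ≤ ENNReal.ofReal 1 := ENNReal.ofReal_le_ofReal hx
          _ = 1 := ENNReal.ofReal_one
          _ ≤ _ := le_add_self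
      · have : V x ≤ V x ^ α := by
          conv_lhs => rw [← Real.rpow_one (V x)]
          exact Real.rpow_le_rpow_of_exponent_le hx.le hα.le
        exact le_trans (ENNReal.ofReal_le_ofReal this) (self_le_add_right _ _)
    calc ∫⁻ x, ENNReal.ofReal (V x) ∂(μs n)
        ≤ ∫⁻ x, (ENNReal.ofReal (V x ^ α) + 1) ∂(μs n) := lintegral_mono hpt
      _ = (∫⁻ x, ENNReal.ofReal (V x ^ α) ∂(μs n)) + 1 := by
          rw [lintegral_add_right _ measurable_const]
          simp [lintegral_const]
      _ ≤ Mα + 1 := add_le_add_left (hMα n) 1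
  have hVint : ∀ n, Integrable V (μs n) := by
    intro n
    refine ⟨hVmeas.aestronglyMeasurable, ?_⟩
    rw [hasFiniteIntegral_iff_norm]
    have : ∀ x, ENNReal.ofReal ‖V x‖ = ENNReal.ofReal (V x) := fun x => by
      rw [Real.norm_eq_abs, abs_of_pos (hVpos x)]
    simp_rw [this]
    exact lt_of_le_of_lt (hVlint n)
      (ENNReal.add_lt_top.mpr ⟨hMαtop.lt_top, ENNReal.one_lt_top⟩)
  have hVintμ : Integrable V μ := by
    refine ⟨hVmeas.aestronglyMeasurable, ?_⟩
    rw [hasFiniteIntegral_iff_norm]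
    have : ∀ x, ENNReal.ofReal ‖V x‖ = ENNReal.ofReal (V x) := fun x => by
      rw [Real.norm_eq_abs, abs_of_pos (hVpos x)]
    simp_rw [this]
    exact hVμ.lt_top
  have hfsint : ∀ n, Integrable (fs n) (μs n) := fun n =>
    Integrable.mono' ((hVint n).const_mul M') (hfsmeas n).aestronglyMeasurable
      (Eventually.of_forall fun x => by rw [Real.norm_eq_abs]; exact hfsb n x)
  have hfint : Integrable f μ :=
    Integrable.mono' (hVintμ.const_mul M') hfmeas.aestronglyMeasurable
      (Eventually.of_forall fun x => by rw [Real.norm_eq_abs]; exact hfb x)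
  -- generic tail estimate
  have htail : ∀ (ν : Measure X) (g : X → ℝ) (s : Set X), (∀ x, |g x| ≤ M' * V x) →
      ∀ T : ℝ≥0∞, (∫⁻ x in s, ENNReal.ofReal (V x) ∂ν) ≤ T → T ≠ ⊤ →
      |∫ x in s, g x ∂ν| ≤ M' * T.toReal := by
    intro ν g s hgb T hT hTne
    rw [← Real.norm_eq_abs]
    calc ‖∫ x in s, g x ∂ν‖ ≤ (∫⁻ x in s, ENNReal.ofReal ‖g x‖ ∂ν).toReal :=
          norm_integral_le_lintegral_norm g
      _ ≤ (ENNReal.ofReal M' * T).toReal := by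
          apply ENNReal.toReal_mono (ENNReal.mul_ne_top ENNReal.ofReal_ne_top hTne)
          calc ∫⁻ x in s, ENNReal.ofReal ‖g x‖ ∂ν
              ≤ ∫⁻ x in s, ENNReal.ofReal M' * ENNReal.ofReal (V x) ∂ν := by
                refine lintegral_mono fun x => ?_
                rw [← ENNReal.ofReal_mul hM'0.le]
                exact ENNReal.ofReal_le_ofReal (by rw [Real.norm_eq_abs]; exact hgb x)
            _ = ENNReal.ofReal M' * ∫⁻ x in s, ENNReal.ofReal (V x) ∂ν :=
                lintegral_const_mul _ hVmeas.ennreal_ofReal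
            _ ≤ ENNReal.ofReal M' * T := mul_le_mul_right hT _
      _ = M' * T.toReal := by rw [ENNReal.toReal_mul, ENNReal.toReal_ofReal hM'0.le]
  -- μ-tail tends to zero
  have hdom : Tendsto (fun k : ℕ => ∫⁻ x in {x | (k:ℝ) < V x}, ENNReal.ofReal (V x) ∂μ)
      atTop (nhds 0) := by
    have hsm : ∀ k : ℕ, MeasurableSet {x | (k:ℝ) < V x} := fun k =>
      measurableSet_lt measurable_const hVmeas
    have := tendsto_lintegral_of_dominated_convergence (μ := μ)
      (F := fun k : ℕ => ({x | (k:ℝ) < V x}).indicator fun x => ENNReal.ofReal (V x))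
      (f := fun _ => 0) (bound := fun x => ENNReal.ofReal (V x))
      (fun k => (hVmeas.ennreal_ofReal).indicator (hsm k))
      (fun k => Eventually.of_forall fun x => Set.indicator_le_self _ _ x)
      hVμ
      (Eventually.of_forall fun x => by
        refine tendsto_const_nhds.congr' ?_
        filter_upwards [eventually_ge_atTop ⌈V x⌉₊] with k hk
        refine (Set.indicator_of_notMem ?_ _).symm
        simp only [Set.mem_setOf_eq, not_lt]
        exact (Nat.le_ceil (V x)).trans (Nat.cast_le.mpr hk))
    simp only [lintegral_zero] at this
    refine this.congr fun k => ?_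
    rw [lintegral_indicator (hsm k)]
  rw [Metric.tendsto_atTop]
  intro ε hε
  set δ : ℝ := ε / 4 with hδdef
  have hδpos : 0 < δ := by positivity
  obtain ⟨k, hk⟩ := (hdom.eventually_lt_const
    (show (0:ℝ≥0∞) < ENNReal.ofReal (δ / M') from ENNReal.ofReal_pos.mpr (by positivity))).exists
  -- choice of the cutoff K
  set D : ℝ := (M' * Mα.toReal + 1) / δ with hDdef
  have hDpos : 0 < D := by
    have : (0:ℝ) ≤ Mα.toReal := ENNReal.toReal_nonneg
    positivity
  set K : ℝ := max (max 1 (D ^ (α - 1)⁻¹)) (k : ℝ) with hKdef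
  have hK1 : (1:ℝ) ≤ K := le_trans (le_max_left _ _) (le_max_left _ _)
  have hKpos : (0:ℝ) < K := lt_of_lt_of_le one_pos hK1
  have hKk : (k:ℝ) ≤ K := le_max_right _ _
  set c : ℝ := K ^ (α - 1) with hcdef
  have hcpos : 0 < c := Real.rpow_pos_of_pos hKpos _
  have hcD : D ≤ c := by
    calc D = D ^ ((α - 1)⁻¹ * (α - 1)) := by
          rw [inv_mul_cancel₀ hα0.ne', Real.rpow_one]
      _ = (D ^ (α - 1)⁻¹) ^ (α - 1) := Real.rpow_mul hDpos.le _ _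
      _ ≤ K ^ (α - 1) := Real.rpow_le_rpow (Real.rpow_nonneg hDpos.le _)
          (le_trans (le_max_right _ _) (le_max_left _ _)) hα0.le
  set E : Set X := {x | V x ≤ K} with hEdef
  have hEmeas : MeasurableSet E := measurableSet_le hVmeas measurable_const
  have hEc : Eᶜ = {x | K < V x} := by ext x; simp [hEdef, not_le]
  -- tail bound for μs n
  have hcinv_ne : (ENNReal.ofReal c)⁻¹ ≠ ⊤ :=
    ENNReal.inv_ne_top.mpr (ENNReal.ofReal_pos.mpr hcpos).ne'
  have hTne : Mα * (ENNReal.ofReal c)⁻¹ ≠ ⊤ := ENNReal.mul_ne_top hMαtop hcinv_ne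
  have htailn : ∀ n, ∫⁻ x in Eᶜ, ENNReal.ofReal (V x) ∂(μs n) ≤ Mα * (ENNReal.ofReal c)⁻¹ := by
    intro n
    rw [hEc]
    calc ∫⁻ x in {x | K < V x}, ENNReal.ofReal (V x) ∂(μs n)
        ≤ ∫⁻ x in {x | K < V x}, ENNReal.ofReal (V x ^ α) * (ENNReal.ofReal c)⁻¹ ∂(μs n) := by
          refine setLIntegral_mono (hVαmeas.ennreal_ofReal.mul_const _) fun x hx => ?_
          have hx' : K < V x := hx
          have h2 : c ≤ V x ^ (α - 1) :=
            Real.rpow_le_rpow hKpos.le hx'.le hα0.le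
          have h3 : V x * c ≤ V x ^ α := by
            calc V x * c ≤ V x * V x ^ (α - 1) :=
                  mul_le_mul_of_nonneg_left h2 (hVpos x).le
              _ = V x ^ (1 + (α - 1)) := by
                  rw [Real.rpow_add (hVpos x), Real.rpow_one]
              _ = V x ^ α := by ring_nf
          calc ENNReal.ofReal (V x) ≤ ENNReal.ofReal (V x ^ α / c) :=
                ENNReal.ofReal_le_ofReal ((le_div_iff₀ hcpos).mpr h3)
            _ = ENNReal.ofReal (V x ^ α) / ENNReal.ofReal c :=
                ENNReal.ofReal_div_of_pos hcpos
            _ = ENNReal.ofReal (V x ^ α) * (ENNReal.ofReal c)⁻¹ := by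
                rw [ENNReal.div_eq_inv_mul, mul_comm]
        _ = (∫⁻ x in {x | K < V x}, ENNReal.ofReal (V x ^ α) ∂(μs n)) * (ENNReal.ofReal c)⁻¹ :=
          lintegral_mul_const _ hVαmeas.ennreal_ofReal
        _ ≤ Mα * (ENNReal.ofReal c)⁻¹ :=
          mul_le_mul_left ((setLIntegral_le_lintegral _ _).trans (hMα n)) _
  -- numeric bound for the μs-tail
  have hnum : M' * (Mα * (ENNReal.ofReal c)⁻¹).toReal ≤ δ := by
    have hMα0 : (0:ℝ) ≤ Mα.toReal := ENNReal.toReal_nonneg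
    have heq : (Mα * (ENNReal.ofReal c)⁻¹).toReal = Mα.toReal * c⁻¹ := by
      rw [ENNReal.toReal_mul, ENNReal.toReal_inv, ENNReal.toReal_ofReal hcpos.le]
    rw [heq]
    have hδD : δ * D = M' * Mα.toReal + 1 := by
      rw [hDdef, mul_div_cancel₀ _ hδpos.ne']
    have h1 : M' * Mα.toReal ≤ δ * c - 1 := by nlinarith [mul_le_mul_of_nonneg_left hcD hδpos.le]
    calc M' * (Mα.toReal * c⁻¹) = (M' * Mα.toReal) / c := by ring
      _ ≤ (δ * c - 1) / c := by
          gcongr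
      _ ≤ δ := by
          rw [div_le_iff₀ hcpos]
          nlinarith
  -- μ-tail bound
  have htailμ : ∫⁻ x in Eᶜ, ENNReal.ofReal (V x) ∂μ ≤ ENNReal.ofReal (δ / M') := by
    rw [hEc]
    refine le_trans (lintegral_mono_set fun x hx => ?_) hk.le
    exact lt_of_le_of_lt hKk hx
  have hnumμ : M' * (ENNReal.ofReal (δ / M')).toReal ≤ δ := by
    rw [ENNReal.toReal_ofReal (by positivity)]
    rw [mul_div_cancel₀ _ hM'0.ne']
  -- the bounded middle part
  set g : ℕ → X → ℝ := fun n => E.indicator (fs n) with hgdef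
  set G : X → ℝ := E.indicator f with hGdef
  have hmid : Tendsto (fun n => ∫ x, g n x ∂(μs n)) atTop (nhds (∫ x, G x ∂μ)) := by
    refine aux_bdd_setwise μ μs hμs hsetwise
      (fun n => (hfsmeas n).indicator hEmeas) (hfmeas.indicator hEmeas)
      (fun x => ?_) (C := M' * K) (by positivity) (fun n x => ?_)
    · by_cases hx : x ∈ E
      · simpa [hgdef, hGdef, Set.indicator_of_mem hx] using hfs x
      · simpa [hgdef, hGdef, Set.indicator_of_notMem hx] using tendsto_const_nhds
    · by_cases hx : x ∈ E
      · simp only [Set.indicator_of_mem hx]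
        exact (hfsb n x).trans (mul_le_mul_of_nonneg_left hx (le_of_lt hM'0))
      · simp only [Set.indicator_of_notMem hx, abs_zero]
        positivity
  obtain ⟨N, hN⟩ := Metric.tendsto_atTop.mp hmid δ hδpos
  refine ⟨N, fun n hn => ?_⟩
  rw [Real.dist_eq]
  have hsplit_n : ∫ x, fs n x ∂(μs n) = (∫ x, g n x ∂(μs n)) + ∫ x in Eᶜ, fs n x ∂(μs n) := by
    rw [hgdef]
    simp only [integral_indicator hEmeas]
    exact (integral_add_compl hEmeas (hfsint n)).symm
  have hsplit : ∫ x, f x ∂μ = (∫ x, G x ∂μ) + ∫ x in Eᶜ, f x ∂μ := by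
    rw [hGdef]
    simp only [integral_indicator hEmeas]
    exact (integral_add_compl hEmeas hfint).symm
  have t1 : |∫ x in Eᶜ, fs n x ∂(μs n)| ≤ δ :=
    (htail (μs n) (fs n) Eᶜ (hfsb n) _ (htailn n) hTne).trans hnum
  have t2 : |∫ x in Eᶜ, f x ∂μ| ≤ δ :=
    (htail μ f Eᶜ hfb _ htailμ ENNReal.ofReal_ne_top).trans hnumμ
  have t3 : |(∫ x, g n x ∂(μs n)) - ∫ x, G x ∂μ| < δ := by
    have := hN n hn
    rwa [Real.dist_eq] at this
  calc |(∫ x, fs n x ∂(μs n)) - ∫ x, f x ∂μ|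
      = |((∫ x, g n x ∂(μs n)) - ∫ x, G x ∂μ) +
          ((∫ x in Eᶜ, fs n x ∂(μs n)) - ∫ x in Eᶜ, f x ∂μ)| := by
        rw [hsplit_n, hsplit]; ring_nf
    _ ≤ |(∫ x, g n x ∂(μs n)) - ∫ x, G x ∂μ| +
          |(∫ x in Eᶜ, fs n x ∂(μs n)) - ∫ x in Eᶜ, f x ∂μ| := abs_add_le _ _
    _ ≤ |(∫ x, g n x ∂(μs n)) - ∫ x, G x ∂μ| +
          (|∫ x in Eᶜ, fs n x ∂(μs n)| + |∫ x in Eᶜ, f x ∂μ|) := by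
        gcongr
        exact abs_sub _ _
    _ < δ + (δ + δ) := by
        have := add_le_add t1 t2
        linarith
    _ < ε := by rw [hδdef]; linarith
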